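/- arXiv:1105.3404 — 3 statements merged into one kernel-verified Lean document; each statement's English description precedes it below -/
import Mathlib

section
/- Let (B,g_B) and (F,g_F) be radical-stationary singular semi-Riemannian manifolds and let f : B → ℝ be a smooth function whose differential df is radical-annihilator. Then the warped product (M, g) = B ×_f F is radical-stationary, i.e. for all smooth vector fields X, Y : M → E_B × E_F and every point (p,q) ∈ M there exists w ∈ E_B × E_F such that κ(X,Y,Z)(p,q) = g (p,q) w (Z (p,q)) for every smooth vector field Z : M → E_B × E_F. -/
noncomputable section

section Basic

variable {E : Type*} [NormedAddCommGroup E] [NormedSpace ℝ E]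

/-- The Lie bracket of two vector fields. -/
def lieB (X Y : E → E) : E → E :=
  fun p => fderiv ℝ Y p (X p) - fderiv ℝ X p (Y p)

/-- The Koszul form of a singular metric `g`. -/
def koszul (g : E → (E →L[ℝ] E →L[ℝ] ℝ)) (X Y Z : E → E) : E → ℝ :=
  fun p =>
    (1 / 2) * (fderiv ℝ (fun x => g x (Y x) (Z x)) p (X p)
      + fderiv ℝ (fun x => g x (Z x) (X x)) p (Y p)
      - fderiv ℝ (fun x => g x (X x) (Y x)) p (Z p)
      - g p (X p) (lieB Y Z p)
      + g p (Y p) (lieB Z X p)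
      + g p (Z p) (lieB X Y p))

/-- `g` is a singular (semi-Riemannian) metric on `M`: smooth and pointwise symmetric. -/
def IsSingularMetric (M : Set E) (g : E → (E →L[ℝ] E →L[ℝ] ℝ)) : Prop :=
  ContDiffOn ℝ (⊤ : ℕ∞) g M ∧ ∀ p ∈ M, ∀ u v : E, g p u v = g p v u

/-- `w` represents the 1-form `κ(X,Y,_)` at `p` via the metric `g`. -/
def KoszulWitness (M : Set E) (g : E → (E →L[ℝ] E →L[ℝ] ℝ)) (X Y : E → E)
    (p w : E) : Prop :=
  ∀ Z : E → E, ContDiffOn ℝ (⊤ : ℕ∞) Z M → koszul g X Y Z p = g p w (Z p)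

/-- `(M,g)` is radical-stationary. -/
def RadicalStationary (M : Set E) (g : E → (E →L[ℝ] E →L[ℝ] ℝ)) : Prop :=
  ∀ X Y : E → E, ContDiffOn ℝ (⊤ : ℕ∞) X M → ContDiffOn ℝ (⊤ : ℕ∞) Y M →
    ∀ p ∈ M, ∃ w : E, KoszulWitness M g X Y p w

/-- `(M,g)` is semi-regular: radical-stationary and every covariant contraction
`κ(X,Y,•)κ(Z,T,•)` is a (well-defined) smooth function on `M`. -/
def SemiRegular (M : Set E) (g : E → (E →L[ℝ] E →L[ℝ] ℝ)) : Prop :=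
  RadicalStationary M g ∧
  ∀ X Y Z T : E → E, ContDiffOn ℝ (⊤ : ℕ∞) X M → ContDiffOn ℝ (⊤ : ℕ∞) Y M →
    ContDiffOn ℝ (⊤ : ℕ∞) Z M → ContDiffOn ℝ (⊤ : ℕ∞) T M →
    ∃ k : E → ℝ, ContDiffOn ℝ (⊤ : ℕ∞) k M ∧
      ∀ p ∈ M, ∀ w₁ w₂ : E,
        KoszulWitness M g X Y p w₁ → KoszulWitness M g Z T p w₂ →
          k p = g p w₁ w₂

/-- The differential of `f` is radical-annihilator on `B`. -/
def DiffRadicalAnnihilator (B : Set E) (g : E → (E →L[ℝ] E →L[ℝ] ℝ))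
    (f : E → ℝ) : Prop :=
  ∀ p ∈ B, ∃ w : E, ∀ z : E, fderiv ℝ f p z = g p w z

/-- `df ∈ Ω¹_s(B)`: `df` is radical-annihilator and the 1-forms `Y ↦ (∇_X df)(Y)`,
`(∇_X df)(Y) := X(Y f) - κ(X,Y,•)(df)(•)`, are radical-annihilator. -/
def DiffInOmega1s (B : Set E) (g : E → (E →L[ℝ] E →L[ℝ] ℝ)) (f : E → ℝ) : Prop :=
  DiffRadicalAnnihilator B g f ∧
  ∀ X : E → E, ContDiffOn ℝ (⊤ : ℕ∞) X B → ∀ p ∈ B, ∃ w : E,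
    ∀ Y : E → E, ContDiffOn ℝ (⊤ : ℕ∞) Y B → ∀ w₁ w₂ : E,
      KoszulWitness B g X Y p w₁ → (∀ z : E, fderiv ℝ f p z = g p w₂ z) →
        fderiv ℝ (fun x => fderiv ℝ f x (Y x)) p (X p) - g p w₁ w₂ = g p w (Y p)

/-- The value of the Riemann curvature tensor
`R(X,Y,Z,T) = X κ(Y,Z,T) - Y κ(X,Z,T) - κ([X,Y],Z,T) + κ(X,Z,•)κ(Y,T,•) - κ(Y,Z,•)κ(X,T,•)`
at `p`, written using vectors `w₁, w₂, w₃, w₄` representing the 1-forms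
`κ(X,Z,_), κ(Y,T,_), κ(Y,Z,_), κ(X,T,_)` at `p`, so that the covariant contractions
are `g p w₁ w₂` and `g p w₃ w₄`. -/
def riemannExpr (g : E → (E →L[ℝ] E →L[ℝ] ℝ)) (X Y Z T : E → E) (p : E)
    (w₁ w₂ w₃ w₄ : E) : ℝ :=
  fderiv ℝ (koszul g Y Z T) p (X p) - fderiv ℝ (koszul g X Z T) p (Y p)
    - koszul g (lieB X Y) Z T p + g p w₁ w₂ - g p w₃ w₄

end Basic

section Warped

variable {E₁ E₂ : Type*} [NormedAddCommGroup E₁] [NormedSpace ℝ E₁]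
  [NormedAddCommGroup E₂] [NormedSpace ℝ E₂]

/-- Lift a bilinear form on `E₁` to `E₁ × E₂` (acting through the first factor). -/
def liftBilinFst (b : E₁ →L[ℝ] E₁ →L[ℝ] ℝ) :
    (E₁ × E₂) →L[ℝ] (E₁ × E₂) →L[ℝ] ℝ :=
  (((b.comp (ContinuousLinearMap.fst ℝ E₁ E₂)).flip).comp
    (ContinuousLinearMap.fst ℝ E₁ E₂)).flip

/-- Lift a bilinear form on `E₂` to `E₁ × E₂` (acting through the second factor). -/
def liftBilinSnd (b : E₂ →L[ℝ] E₂ →L[ℝ] ℝ) :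
    (E₁ × E₂) →L[ℝ] (E₁ × E₂) →L[ℝ] ℝ :=
  (((b.comp (ContinuousLinearMap.snd ℝ E₁ E₂)).flip).comp
    (ContinuousLinearMap.snd ℝ E₁ E₂)).flip

/-- The warped product metric `g = g_B + f² g_F` on `B × F ⊆ E₁ × E₂`:
`g (p,q) ((u₁,u₂),(v₁,v₂)) = g_B p u₁ v₁ + f(p)² * g_F q u₂ v₂`. -/
def warpedMetric (gB : E₁ → (E₁ →L[ℝ] E₁ →L[ℝ] ℝ))
    (gF : E₂ → (E₂ →L[ℝ] E₂ →L[ℝ] ℝ)) (f : E₁ → ℝ) :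
    (E₁ × E₂) → ((E₁ × E₂) →L[ℝ] (E₁ × E₂) →L[ℝ] ℝ) :=
  fun x => liftBilinFst (gB x.1) + (f x.1) ^ 2 • liftBilinSnd (gF x.2)

/-- The lift to `E₁ × E₂` of a vector field on the base. -/
def liftVecB (X : E₁ → E₁) : (E₁ × E₂) → (E₁ × E₂) := fun x => (X x.1, 0)

/-- The lift to `E₁ × E₂` of a vector field on the fiber. -/
def liftVecF (V : E₂ → E₂) : (E₁ × E₂) → (E₁ × E₂) := fun x => (0, V x.2)

end Warped

section MyHelpers

variable {E : Type*} [NormedAddCommGroup E] [NormedSpace ℝ E]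

lemma my_fderiv_g_apply_const {g : E → (E →L[ℝ] E →L[ℝ] ℝ)} {p : E}
    (hg : DifferentiableAt ℝ g p) (u v d : E) :
    fderiv ℝ (fun w => g w u v) p d = fderiv ℝ g p d u v := by
  rw [fderiv_clm_apply (hg.clm_apply (differentiableAt_const u)) (differentiableAt_const v),
      fderiv_clm_apply hg (differentiableAt_const u)]
  simp

lemma koszul_pointwise {M : Set E} (hM : IsOpen M)
    {g : E → (E →L[ℝ] E →L[ℝ] ℝ)} (hg : ContDiffOn ℝ (⊤:ℕ∞) g M)
    (hsym : ∀ p ∈ M, ∀ u v : E, g p u v = g p v u)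
    {X Y Z : E → E} (hX : ContDiffOn ℝ (⊤:ℕ∞) X M)
    (hY : ContDiffOn ℝ (⊤:ℕ∞) Y M) (hZ : ContDiffOn ℝ (⊤:ℕ∞) Z M)
    {p : E} (hp : p ∈ M) :
    koszul g X Y Z p =
      (1/2) * (fderiv ℝ g p (X p) (Y p) (Z p) + fderiv ℝ g p (Y p) (Z p) (X p)
        - fderiv ℝ g p (Z p) (X p) (Y p)) + g p (fderiv ℝ Y p (X p)) (Z p) := by
  have hmem := hM.mem_nhds hp
  have hgd : DifferentiableAt ℝ g p := (hg.contDiffAt hmem).differentiableAt (by norm_num)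
  have hXd : DifferentiableAt ℝ X p := (hX.contDiffAt hmem).differentiableAt (by norm_num)
  have hYd : DifferentiableAt ℝ Y p := (hY.contDiffAt hmem).differentiableAt (by norm_num)
  have hZd : DifferentiableAt ℝ Z p := (hZ.contDiffAt hmem).differentiableAt (by norm_num)
  have key : ∀ (U V : E → E), DifferentiableAt ℝ U p → DifferentiableAt ℝ V p →
      ∀ d, fderiv ℝ (fun x => g x (U x) (V x)) p d =
        fderiv ℝ g p d (U p) (V p) + g p (fderiv ℝ U p d) (V p)
          + g p (U p) (fderiv ℝ V p d) := by
    intro U V hU hV d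
    rw [fderiv_clm_apply (hgd.clm_apply hU) hV, fderiv_clm_apply hgd hU]
    simp [ContinuousLinearMap.add_apply]
    ring
  simp only [koszul, lieB]
  rw [key Y Z hYd hZd, key Z X hZd hXd, key X Y hXd hYd]
  simp only [map_sub]
  have hs1 : g p (fderiv ℝ Z p (Y p)) (X p) = g p (X p) (fderiv ℝ Z p (Y p)) :=
    hsym p hp _ _
  have hs2 : g p (fderiv ℝ X p (Z p)) (Y p) = g p (Y p) (fderiv ℝ X p (Z p)) :=
    hsym p hp _ _
  have hs3 : g p (Z p) (fderiv ℝ Y p (X p)) = g p (fderiv ℝ Y p (X p)) (Z p) :=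
    hsym p hp _ _
  rw [hs1, hs2, hs3]
  ring

end MyHelpers

section MyWarpedHelpers

variable {E₁ E₂ : Type*} [NormedAddCommGroup E₁] [NormedSpace ℝ E₁]
  [NormedAddCommGroup E₂] [NormedSpace ℝ E₂]

lemma liftBilinFst_apply (b : E₁ →L[ℝ] E₁ →L[ℝ] ℝ) (u v : E₁ × E₂) :
    liftBilinFst b u v = b u.1 v.1 := rfl

lemma liftBilinSnd_apply (b : E₂ →L[ℝ] E₂ →L[ℝ] ℝ) (u v : E₁ × E₂) :
    liftBilinSnd b u v = b u.2 v.2 := rfl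

lemma warpedMetric_apply (gB : E₁ → (E₁ →L[ℝ] E₁ →L[ℝ] ℝ))
    (gF : E₂ → (E₂ →L[ℝ] E₂ →L[ℝ] ℝ)) (f : E₁ → ℝ) (x u v : E₁ × E₂) :
    warpedMetric gB gF f x u v = gB x.1 u.1 v.1 + f x.1 ^ 2 * gF x.2 u.2 v.2 := rfl

lemma isBLM_liftBilinFst :
    IsBoundedLinearMap ℝ
      (liftBilinFst : (E₁ →L[ℝ] E₁ →L[ℝ] ℝ) → ((E₁ × E₂) →L[ℝ] (E₁ × E₂) →L[ℝ] ℝ)) := by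
  refine ⟨⟨fun a b => ?_, fun c a => ?_⟩, 1, zero_lt_one, fun b => ?_⟩
  · exact ContinuousLinearMap.ext fun u => ContinuousLinearMap.ext fun v => by
      simp [liftBilinFst_apply]
  · exact ContinuousLinearMap.ext fun u => ContinuousLinearMap.ext fun v => by
      simp [liftBilinFst_apply]
  · rw [one_mul]
    refine ContinuousLinearMap.opNorm_le_bound _ (norm_nonneg b) fun u => ?_
    refine ContinuousLinearMap.opNorm_le_bound _ (by positivity) fun v => ?_
    rw [liftBilinFst_apply]
    calc ‖b u.1 v.1‖ ≤ ‖b‖ * ‖u.1‖ * ‖v.1‖ := b.le_opNorm₂ u.1 v.1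
      _ ≤ ‖b‖ * ‖u‖ * ‖v‖ := by
          gcongr <;> [exact norm_fst_le u; exact norm_fst_le v]

lemma isBLM_liftBilinSnd :
    IsBoundedLinearMap ℝ
      (liftBilinSnd : (E₂ →L[ℝ] E₂ →L[ℝ] ℝ) → ((E₁ × E₂) →L[ℝ] (E₁ × E₂) →L[ℝ] ℝ)) := by
  refine ⟨⟨fun a b => ?_, fun c a => ?_⟩, 1, zero_lt_one, fun b => ?_⟩
  · exact ContinuousLinearMap.ext fun u => ContinuousLinearMap.ext fun v => by
      simp [liftBilinSnd_apply]
  · exact ContinuousLinearMap.ext fun u => ContinuousLinearMap.ext fun v => by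
      simp [liftBilinSnd_apply]
  · rw [one_mul]
    refine ContinuousLinearMap.opNorm_le_bound _ (norm_nonneg b) fun u => ?_
    refine ContinuousLinearMap.opNorm_le_bound _ (by positivity) fun v => ?_
    rw [liftBilinSnd_apply]
    calc ‖b u.2 v.2‖ ≤ ‖b‖ * ‖u.2‖ * ‖v.2‖ := b.le_opNorm₂ u.2 v.2
      _ ≤ ‖b‖ * ‖u‖ * ‖v‖ := by
          gcongr <;> [exact norm_snd_le u; exact norm_snd_le v]

lemma warpedMetric_contDiffOn {B : Set E₁} {F : Set E₂}
    {gB : E₁ → (E₁ →L[ℝ] E₁ →L[ℝ] ℝ)} {gF : E₂ → (E₂ →L[ℝ] E₂ →L[ℝ] ℝ)}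
    {f : E₁ → ℝ} (hgB : ContDiffOn ℝ (⊤:ℕ∞) gB B) (hgF : ContDiffOn ℝ (⊤:ℕ∞) gF F)
    (hf : ContDiffOn ℝ (⊤:ℕ∞) f B) :
    ContDiffOn ℝ (⊤:ℕ∞) (warpedMetric gB gF f) (B ×ˢ F) := by
  have h1 : ContDiffOn ℝ (⊤:ℕ∞) (fun x : E₁ × E₂ => gB x.1) (B ×ˢ F) :=
    hgB.comp contDiff_fst.contDiffOn fun x hx => hx.1
  have h2 : ContDiffOn ℝ (⊤:ℕ∞) (fun x : E₁ × E₂ => gF x.2) (B ×ˢ F) :=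
    hgF.comp contDiff_snd.contDiffOn fun x hx => hx.2
  have h3 : ContDiffOn ℝ (⊤:ℕ∞) (fun x : E₁ × E₂ => f x.1) (B ×ˢ F) :=
    hf.comp contDiff_fst.contDiffOn fun x hx => hx.1
  have h4 : ContDiffOn ℝ (⊤:ℕ∞)
      ((liftBilinFst : (E₁ →L[ℝ] E₁ →L[ℝ] ℝ) → ((E₁ × E₂) →L[ℝ] (E₁ × E₂) →L[ℝ] ℝ)) ∘
        (fun x : E₁ × E₂ => gB x.1)) (B ×ˢ F) :=
    isBLM_liftBilinFst.contDiff.comp_contDiffOn h1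
  have h5 : ContDiffOn ℝ (⊤:ℕ∞)
      ((liftBilinSnd : (E₂ →L[ℝ] E₂ →L[ℝ] ℝ) → ((E₁ × E₂) →L[ℝ] (E₁ × E₂) →L[ℝ] ℝ)) ∘
        (fun x : E₁ × E₂ => gF x.2)) (B ×ˢ F) :=
    isBLM_liftBilinSnd.contDiff.comp_contDiffOn h2
  have := @NormedSpace.toIsBoundedSMul ℝ (E₁ × E₂ →L[ℝ] E₁ × E₂ →L[ℝ] ℝ) _ _ _
  exact h4.add ((h3.pow 2).smul h5)

lemma warped_fderiv {B : Set E₁} {F : Set E₂} (hB : IsOpen B) (hF : IsOpen F)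
    {gB : E₁ → (E₁ →L[ℝ] E₁ →L[ℝ] ℝ)} {gF : E₂ → (E₂ →L[ℝ] E₂ →L[ℝ] ℝ)}
    {f : E₁ → ℝ} (hgB : ContDiffOn ℝ (⊤:ℕ∞) gB B) (hgF : ContDiffOn ℝ (⊤:ℕ∞) gF F)
    (hf : ContDiffOn ℝ (⊤:ℕ∞) f B) {r : E₁ × E₂} (hr : r ∈ B ×ˢ F)
    (u v d : E₁ × E₂) :
    fderiv ℝ (warpedMetric gB gF f) r d u v =
      fderiv ℝ gB r.1 d.1 u.1 v.1
        + 2 * f r.1 * fderiv ℝ f r.1 d.1 * gF r.2 u.2 v.2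
        + f r.1 ^ 2 * fderiv ℝ gF r.2 d.2 u.2 v.2 := by
  have hWd : DifferentiableAt ℝ (warpedMetric gB gF f) r :=
    ((warpedMetric_contDiffOn hgB hgF hf).contDiffAt
      ((hB.prod hF).mem_nhds hr)).differentiableAt (by norm_num)
  have hgBd : DifferentiableAt ℝ gB r.1 :=
    ((hgB.contDiffAt (hB.mem_nhds hr.1)).differentiableAt (by norm_num))
  have hgFd : DifferentiableAt ℝ gF r.2 :=
    ((hgF.contDiffAt (hF.mem_nhds hr.2)).differentiableAt (by norm_num))
  have hfd : DifferentiableAt ℝ f r.1 :=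
    ((hf.contDiffAt (hB.mem_nhds hr.1)).differentiableAt (by norm_num))
  rw [← my_fderiv_g_apply_const hWd u v d]
  have hb : DifferentiableAt ℝ (fun w => gB w u.1 v.1) r.1 :=
    (hgBd.clm_apply (differentiableAt_const u.1)).clm_apply (differentiableAt_const v.1)
  have hc : DifferentiableAt ℝ (fun w => gF w u.2 v.2) r.2 :=
    (hgFd.clm_apply (differentiableAt_const u.2)).clm_apply (differentiableAt_const v.2)
  have H1 : HasFDerivAt (fun w : E₁ × E₂ => gB w.1 u.1 v.1)
      ((fderiv ℝ (fun w => gB w u.1 v.1) r.1).comp (ContinuousLinearMap.fst ℝ E₁ E₂)) r :=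
    hb.hasFDerivAt.comp r hasFDerivAt_fst
  have H2 : HasFDerivAt (fun w : E₁ × E₂ => f w.1)
      ((fderiv ℝ f r.1).comp (ContinuousLinearMap.fst ℝ E₁ E₂)) r :=
    hfd.hasFDerivAt.comp r hasFDerivAt_fst
  have H3 : HasFDerivAt (fun w : E₁ × E₂ => gF w.2 u.2 v.2)
      ((fderiv ℝ (fun w => gF w u.2 v.2) r.2).comp (ContinuousLinearMap.snd ℝ E₁ E₂)) r :=
    hc.hasFDerivAt.comp r hasFDerivAt_snd
  have H2sq : HasFDerivAt (fun w : E₁ × E₂ => f w.1 ^ 2)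
      (f r.1 • ((fderiv ℝ f r.1).comp (ContinuousLinearMap.fst ℝ E₁ E₂))
        + f r.1 • ((fderiv ℝ f r.1).comp (ContinuousLinearMap.fst ℝ E₁ E₂))) r := by
    simpa [pow_two, Pi.mul_def] using H2.mul H2
  have H : HasFDerivAt (fun w : E₁ × E₂ => gB w.1 u.1 v.1 + f w.1 ^ 2 * gF w.2 u.2 v.2)
      (((fderiv ℝ (fun w => gB w u.1 v.1) r.1).comp (ContinuousLinearMap.fst ℝ E₁ E₂))
        + ((f r.1 ^ 2) • ((fderiv ℝ (fun w => gF w u.2 v.2) r.2).comp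
            (ContinuousLinearMap.snd ℝ E₁ E₂))
          + (gF r.2 u.2 v.2) •
            (f r.1 • ((fderiv ℝ f r.1).comp (ContinuousLinearMap.fst ℝ E₁ E₂))
              + f r.1 • ((fderiv ℝ f r.1).comp (ContinuousLinearMap.fst ℝ E₁ E₂))))) r :=
    H1.add (H2sq.mul H3)
  have heq : (fun w : E₁ × E₂ => warpedMetric gB gF f w u v)
      = fun w : E₁ × E₂ => gB w.1 u.1 v.1 + f w.1 ^ 2 * gF w.2 u.2 v.2 := rfl
  rw [heq, H.fderiv]
  simp only [ContinuousLinearMap.add_apply, ContinuousLinearMap.smul_apply,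
    ContinuousLinearMap.comp_apply, ContinuousLinearMap.coe_fst', ContinuousLinearMap.coe_snd',
    smul_eq_mul]
  rw [my_fderiv_g_apply_const hgBd u.1 v.1 d.1, my_fderiv_g_apply_const hgFd u.2 v.2 d.2]
  ring

end MyWarpedHelpers


/-- The warped product of radical-stationary singular semi-Riemannian
manifolds, with warping function whose differential is radical-annihilator, is
radical-stationary. -/
theorem warpedProduct_radicalStationary
    {E₁ E₂ : Type*} [NormedAddCommGroup E₁] [NormedSpace ℝ E₁] [FiniteDimensional ℝ E₁]
    [NormedAddCommGroup E₂] [NormedSpace ℝ E₂] [FiniteDimensional ℝ E₂]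
    (B : Set E₁) (F : Set E₂) (hB : IsOpen B) (hF : IsOpen F)
    (gB : E₁ → (E₁ →L[ℝ] E₁ →L[ℝ] ℝ)) (gF : E₂ → (E₂ →L[ℝ] E₂ →L[ℝ] ℝ))
    (hgB : IsSingularMetric B gB) (hgF : IsSingularMetric F gF)
    (hrsB : RadicalStationary B gB) (hrsF : RadicalStationary F gF)
    (f : E₁ → ℝ) (hf : ContDiffOn ℝ (⊤ : ℕ∞) f B)
    (hdf : DiffRadicalAnnihilator B gB f) :
    RadicalStationary (B ×ˢ F) (warpedMetric gB gF f) := by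
  intro X Y hX hY r hr
  have hp : r.1 ∈ B := hr.1
  have hq : r.2 ∈ F := hr.2
  have hMopen : IsOpen (B ×ˢ F) := hB.prod hF
  have hW := warpedMetric_contDiffOn hgB.1 hgF.1 hf
  have hWsym : ∀ x ∈ B ×ˢ F, ∀ u v : E₁ × E₂,
      warpedMetric gB gF f x u v = warpedMetric gB gF f x v u := by
    intro x hx u v
    rw [warpedMetric_apply, warpedMetric_apply, hgB.2 x.1 hx.1 u.1 v.1,
      hgF.2 x.2 hx.2 u.2 v.2]
  obtain ⟨a₁, ha₁⟩ := hrsB (fun _ => (X r).1) (fun _ => (Y r).1)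
    contDiffOn_const contDiffOn_const r.1 hp
  obtain ⟨a₂, ha₂⟩ := hrsF (fun _ => (X r).2) (fun _ => (Y r).2)
    contDiffOn_const contDiffOn_const r.2 hq
  obtain ⟨uB, huB⟩ := hdf r.1 hp
  have hgBd : DifferentiableAt ℝ gB r.1 :=
    ((hgB.1.contDiffAt (hB.mem_nhds hp)).differentiableAt (by norm_num))
  have hgFd : DifferentiableAt ℝ gF r.2 :=
    ((hgF.1.contDiffAt (hF.mem_nhds hq)).differentiableAt (by norm_num))
  have DBkey : ∀ z₁ : E₁, (1/2) * (fderiv ℝ gB r.1 (X r).1 (Y r).1 z₁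
      + fderiv ℝ gB r.1 (Y r).1 z₁ (X r).1 - fderiv ℝ gB r.1 z₁ (X r).1 (Y r).1)
      = gB r.1 a₁ z₁ := by
    intro z₁
    have h := ha₁ (fun _ => z₁) contDiffOn_const
    rw [koszul_pointwise hB hgB.1 hgB.2 contDiffOn_const contDiffOn_const
      contDiffOn_const hp] at h
    simpa using h
  have DFkey : ∀ z₂ : E₂, (1/2) * (fderiv ℝ gF r.2 (X r).2 (Y r).2 z₂
      + fderiv ℝ gF r.2 (Y r).2 z₂ (X r).2 - fderiv ℝ gF r.2 z₂ (X r).2 (Y r).2)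
      = gF r.2 a₂ z₂ := by
    intro z₂
    have h := ha₂ (fun _ => z₂) contDiffOn_const
    rw [koszul_pointwise hF hgF.1 hgF.2 contDiffOn_const contDiffOn_const
      contDiffOn_const hq] at h
    simpa using h
  set s : ℝ := if f r.1 = 0 then 0 else (f r.1)⁻¹ with hs_def
  have hs : f r.1 ^ 2 * s = f r.1 := by
    by_cases h : f r.1 = 0
    · simp [hs_def, h]
    · rw [hs_def, if_neg h]
      field_simp
  refine ⟨(a₁ - (f r.1 * gF r.2 (X r).2 (Y r).2) • uB + (fderiv ℝ Y r (X r)).1,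
      a₂ + (s * fderiv ℝ f r.1 (X r).1) • (Y r).2
        + (s * fderiv ℝ f r.1 (Y r).1) • (X r).2 + (fderiv ℝ Y r (X r)).2), ?_⟩
  intro Z hZ
  rw [koszul_pointwise hMopen hW hWsym hX hY hZ hr]
  rw [warped_fderiv hB hF hgB.1 hgF.1 hf hr (Y r) (Z r) (X r),
    warped_fderiv hB hF hgB.1 hgF.1 hf hr (Z r) (X r) (Y r),
    warped_fderiv hB hF hgB.1 hgF.1 hf hr (X r) (Y r) (Z r)]
  rw [warpedMetric_apply, warpedMetric_apply]
  have e1 := DBkey (Z r).1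
  have e2 := DFkey (Z r).2
  have e3 := huB (Z r).1
  have hsymF : gF r.2 (Z r).2 (X r).2 = gF r.2 (X r).2 (Z r).2 := hgF.2 r.2 hq _ _
  simp only [map_add, map_sub, map_smul, ContinuousLinearMap.add_apply,
    ContinuousLinearMap.sub_apply, ContinuousLinearMap.smul_apply, smul_eq_mul]
  rw [hsymF]
  linear_combination e1 + (f r.1 ^ 2) * e2 - (f r.1 * gF r.2 (X r).2 (Y r).2) * e3
    - (fderiv ℝ f r.1 (X r).1 * gF r.2 (Y r).2 (Z r).2
      + fderiv ℝ f r.1 (Y r).1 * gF r.2 (X r).2 (Z r).2) * hs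


end
end

section
/- Let (B,g_B) and (F,g_F) be semi-regular singular semi-Riemannian manifolds, f : B → ℝ smooth with df ∈ Ω¹_s(B), and let (M,g) = B ×_f F be the warped product (which is semi-regular). For smooth vector fields X, Y, Z, T : B → E_B with lifts X̃, Ỹ, Z̃, T̃ on M, the Riemann curvature tensors satisfy R(X̃,Ỹ,Z̃,T̃)(p,q) = R_B(X,Y,Z,T)(p) for all (p,q) ∈ M, where R is the Riemann curvature of (M,g) and R_B that of (B,g_B). -/
noncomputable section

section AuxLemmas

variable {E₁ E₂ : Type*} [NormedAddCommGroup E₁] [NormedSpace ℝ E₁]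
  [NormedAddCommGroup E₂] [NormedSpace ℝ E₂]

theorem fderiv_fst_comp {G : Type*} [NormedAddCommGroup G] [NormedSpace ℝ G]
    (h : E₁ → G) (x : E₁ × E₂) (u : E₁) (v : E₂) :
    fderiv ℝ (fun y : E₁ × E₂ => h y.1) x (u, v) = fderiv ℝ h x.1 u := by
  by_cases hd : DifferentiableAt ℝ h x.1
  · rw [show (fun y : E₁ × E₂ => h y.1) = h ∘ Prod.fst from rfl,
      fderiv_comp x hd differentiableAt_fst]
    simp [fderiv_fst]
  · have h2 : ¬ DifferentiableAt ℝ (fun y : E₁ × E₂ => h y.1) x := by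
      intro hc
      have : DifferentiableAt ℝ (fun z : E₁ => (fun y : E₁ × E₂ => h y.1) (z, x.2)) x.1 :=
        by have := hc.comp x.1 ((differentiableAt_id : DifferentiableAt ℝ (id : E₁ → E₁) x.1).prodMk (differentiableAt_const x.2)); exact this
      exact hd this
    rw [fderiv_zero_of_not_differentiableAt hd, fderiv_zero_of_not_differentiableAt h2]
    simp

theorem fderiv_liftVecB (Y : E₁ → E₁) (x : E₁ × E₂) (u : E₁) (v : E₂) :
    fderiv ℝ (liftVecB Y : E₁ × E₂ → E₁ × E₂) x (u, v) = (fderiv ℝ Y x.1 u, 0) := by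
  by_cases hd : DifferentiableAt ℝ Y x.1
  · have h1 : DifferentiableAt ℝ (fun y : E₁ × E₂ => Y y.1) x :=
      hd.comp x differentiableAt_fst
    have : fderiv ℝ (liftVecB Y : E₁ × E₂ → E₁ × E₂) x
        = (fderiv ℝ (fun y : E₁ × E₂ => Y y.1) x).prod (fderiv ℝ (fun _ : E₁ × E₂ => (0 : E₂)) x) :=
      h1.fderiv_prodMk (differentiableAt_const _)
    rw [this]
    simp [ContinuousLinearMap.prod_apply, fderiv_fst_comp]
  · have h2 : ¬ DifferentiableAt ℝ (liftVecB Y : E₁ × E₂ → E₁ × E₂) x := by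
      intro hc
      have : DifferentiableAt ℝ (fun z : E₁ => ((liftVecB Y : E₁ × E₂ → E₁ × E₂) (z, x.2)).1) x.1 :=
        (differentiableAt_fst.comp x.1
          (by have := hc.comp x.1 ((differentiableAt_id : DifferentiableAt ℝ (id : E₁ → E₁) x.1).prodMk (differentiableAt_const x.2)); exact this))
      exact hd this
    rw [fderiv_zero_of_not_differentiableAt hd, fderiv_zero_of_not_differentiableAt h2]
    simp
    rfl

theorem lieB_lift (X Y : E₁ → E₁) :
    lieB (liftVecB X : E₁ × E₂ → E₁ × E₂) (liftVecB Y) = liftVecB (lieB X Y) := by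
  funext x
  show fderiv ℝ (liftVecB Y : E₁ × E₂ → E₁ × E₂) x (X x.1, 0)
      - fderiv ℝ (liftVecB X : E₁ × E₂ → E₁ × E₂) x (Y x.1, 0) = _
  rw [fderiv_liftVecB, fderiv_liftVecB]
  simp [liftVecB, lieB, Prod.ext_iff]

theorem warped_apply (gB : E₁ → (E₁ →L[ℝ] E₁ →L[ℝ] ℝ)) (gF : E₂ → (E₂ →L[ℝ] E₂ →L[ℝ] ℝ))
    (f : E₁ → ℝ) (x : E₁ × E₂) (u v : E₁ × E₂) :
    warpedMetric gB gF f x u v = gB x.1 u.1 v.1 + (f x.1) ^ 2 * gF x.2 u.2 v.2 := by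
  simp [warpedMetric, liftBilinFst, liftBilinSnd]

theorem prod_fun_lift (gB : E₁ → (E₁ →L[ℝ] E₁ →L[ℝ] ℝ)) (gF : E₂ → (E₂ →L[ℝ] E₂ →L[ℝ] ℝ))
    (f : E₁ → ℝ) (U V : E₁ → E₁) :
    (fun x : E₁ × E₂ => warpedMetric gB gF f x (liftVecB U x) (liftVecB V x))
      = fun x : E₁ × E₂ => gB x.1 (U x.1) (V x.1) := by
  funext x
  rw [warped_apply]
  simp [liftVecB]

theorem koszul_lift (gB : E₁ → (E₁ →L[ℝ] E₁ →L[ℝ] ℝ)) (gF : E₂ → (E₂ →L[ℝ] E₂ →L[ℝ] ℝ))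
    (f : E₁ → ℝ) (X Y Z : E₁ → E₁) (x : E₁ × E₂) :
    koszul (warpedMetric gB gF f) (liftVecB X) (liftVecB Y) (liftVecB Z) x
      = koszul gB X Y Z x.1 := by
  unfold koszul
  rw [prod_fun_lift, prod_fun_lift, prod_fun_lift, lieB_lift, lieB_lift, lieB_lift]
  have hX : liftVecB X x = (X x.1, (0 : E₂)) := rfl
  have hY : liftVecB Y x = (Y x.1, (0 : E₂)) := rfl
  have hZ : liftVecB Z x = (Z x.1, (0 : E₂)) := rfl
  rw [hX, hY, hZ, fderiv_fst_comp (fun p => gB p (Y p) (Z p)) x (X x.1) 0,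
    fderiv_fst_comp (fun p => gB p (Z p) (X p)) x (Y x.1) 0,
    fderiv_fst_comp (fun p => gB p (X p) (Y p)) x (Z x.1) 0]
  rw [warped_apply, warped_apply, warped_apply]
  simp [liftVecB]

theorem koszul_lift_constF (gB : E₁ → (E₁ →L[ℝ] E₁ →L[ℝ] ℝ)) (gF : E₂ → (E₂ →L[ℝ] E₂ →L[ℝ] ℝ))
    (f : E₁ → ℝ) (X Z : E₁ → E₁) (v : E₂) (x : E₁ × E₂) :
    koszul (warpedMetric gB gF f) (liftVecB X) (liftVecB Z)
      (fun _ : E₁ × E₂ => ((0 : E₁), v)) x = 0 := by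
  unfold koszul
  have e1 : (fun y : E₁ × E₂ => warpedMetric gB gF f y (liftVecB Z y) ((0 : E₁), v))
      = fun _ => (0 : ℝ) := by
    funext y; rw [warped_apply]; simp [liftVecB]
  have e2 : (fun y : E₁ × E₂ => warpedMetric gB gF f y (((0 : E₁), v) : E₁ × E₂) (liftVecB X y))
      = fun _ => (0 : ℝ) := by
    funext y; rw [warped_apply]; simp [liftVecB]
  rw [e1, e2, prod_fun_lift]
  have hc : liftVecB Z x = (Z x.1, (0 : E₂)) := rfl
  have hb1 : lieB (liftVecB Z : E₁ × E₂ → E₁ × E₂) (fun _ => ((0 : E₁), v)) x = 0 := by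
    show fderiv ℝ (fun _ : E₁ × E₂ => ((0 : E₁), v)) x (liftVecB Z x)
        - fderiv ℝ (liftVecB Z : E₁ × E₂ → E₁ × E₂) x ((0 : E₁), v) = 0
    rw [fderiv_fun_const, fderiv_liftVecB]
    simp
  have hb2 : lieB (fun _ : E₁ × E₂ => ((0 : E₁), v)) (liftVecB X) x = 0 := by
    show fderiv ℝ (liftVecB X : E₁ × E₂ → E₁ × E₂) x ((0 : E₁), v)
        - fderiv ℝ (fun _ : E₁ × E₂ => ((0 : E₁), v)) x (liftVecB X x) = 0
    rw [fderiv_fun_const, fderiv_liftVecB]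
    simp
  rw [hb1, hb2, lieB_lift]
  show (1:ℝ)/2 * (fderiv ℝ (fun _ : E₁ × E₂ => (0:ℝ)) x (liftVecB X x)
      + fderiv ℝ (fun _ : E₁ × E₂ => (0:ℝ)) x (liftVecB Z x)
      - fderiv ℝ (fun y : E₁ × E₂ => gB y.1 (X y.1) (Z y.1)) x ((0 : E₁), v)
      - warpedMetric gB gF f x (liftVecB X x) 0
      + warpedMetric gB gF f x (liftVecB Z x) 0
      + warpedMetric gB gF f x ((0 : E₁), v) (liftVecB (lieB X Z) x)) = 0
  rw [fderiv_fst_comp (fun p => gB p (X p) (Z p)) x 0 v]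
  rw [warped_apply, warped_apply, warped_apply]
  simp [liftVecB]

end AuxLemmas

/-- For a semi-regular warped product, the Riemann curvature evaluated
on lifts of base vector fields is the lift of the Riemann curvature of the base. -/
theorem warpedProduct_riemann_base
    {E₁ E₂ : Type*} [NormedAddCommGroup E₁] [NormedSpace ℝ E₁] [FiniteDimensional ℝ E₁]
    [NormedAddCommGroup E₂] [NormedSpace ℝ E₂] [FiniteDimensional ℝ E₂]
    (B : Set E₁) (F : Set E₂) (hB : IsOpen B) (hF : IsOpen F)
    (gB : E₁ → (E₁ →L[ℝ] E₁ →L[ℝ] ℝ)) (gF : E₂ → (E₂ →L[ℝ] E₂ →L[ℝ] ℝ))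
    (hgB : IsSingularMetric B gB) (hgF : IsSingularMetric F gF)
    (hsB : SemiRegular B gB) (hsF : SemiRegular F gF)
    (f : E₁ → ℝ) (hf : ContDiffOn ℝ (⊤ : ℕ∞) f B)
    (hdf : DiffInOmega1s B gB f)
    (X Y Z T : E₁ → E₁)
    (hX : ContDiffOn ℝ (⊤ : ℕ∞) X B) (hY : ContDiffOn ℝ (⊤ : ℕ∞) Y B)
    (hZ : ContDiffOn ℝ (⊤ : ℕ∞) Z B) (hT : ContDiffOn ℝ (⊤ : ℕ∞) T B) :
    ∀ p ∈ B, ∀ q ∈ F, ∀ w₁ w₂ w₃ w₄ : E₁ × E₂,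
      KoszulWitness (B ×ˢ F) (warpedMetric gB gF f) (liftVecB X) (liftVecB Z) (p, q) w₁ →
      KoszulWitness (B ×ˢ F) (warpedMetric gB gF f) (liftVecB Y) (liftVecB T) (p, q) w₂ →
      KoszulWitness (B ×ˢ F) (warpedMetric gB gF f) (liftVecB Y) (liftVecB Z) (p, q) w₃ →
      KoszulWitness (B ×ˢ F) (warpedMetric gB gF f) (liftVecB X) (liftVecB T) (p, q) w₄ →
      ∀ v₁ v₂ v₃ v₄ : E₁,
        KoszulWitness B gB X Z p v₁ → KoszulWitness B gB Y T p v₂ →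
        KoszulWitness B gB Y Z p v₃ → KoszulWitness B gB X T p v₄ →
        riemannExpr (warpedMetric gB gF f) (liftVecB X) (liftVecB Y) (liftVecB Z)
            (liftVecB T) (p, q) w₁ w₂ w₃ w₄
          = riemannExpr gB X Y Z T p v₁ v₂ v₃ v₄ := by
  intro p hp q hq w₁ w₂ w₃ w₄ hw₁ hw₂ hw₃ hw₄ v₁ v₂ v₃ v₄ hv₁ hv₂ hv₃ hv₄
  have hsym := hgB.2 p hp
  have claim1 : ∀ (U V : E₁ → E₁) (w : E₁ × E₂) (vv : E₁),
      KoszulWitness (B ×ˢ F) (warpedMetric gB gF f) (liftVecB U) (liftVecB V) (p, q) w →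
      KoszulWitness B gB U V p vv → ∀ z : E₁, gB p w.1 z = gB p vv z := by
    intro U V w vv hww hvv z
    calc gB p w.1 z = koszul gB U V (fun _ => z) p := by
          have h1 := hww (liftVecB (fun _ => z)) contDiffOn_const
          rw [koszul_lift, warped_apply] at h1
          simpa [liftVecB] using h1.symm
      _ = gB p vv z := hvv (fun _ => z) contDiffOn_const
  have claim2 : ∀ (U V : E₁ → E₁) (w : E₁ × E₂),
      KoszulWitness (B ×ˢ F) (warpedMetric gB gF f) (liftVecB U) (liftVecB V) (p, q) w →
      ∀ v : E₂, f p ^ 2 * gF q w.2 v = 0 := by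
    intro U V w hww v
    have h1 := hww (fun _ => ((0 : E₁), v)) contDiffOn_const
    rw [koszul_lift_constF, warped_apply] at h1
    simpa using h1.symm
  have e12 : warpedMetric gB gF f (p, q) w₁ w₂ = gB p v₁ v₂ :=
    calc warpedMetric gB gF f (p, q) w₁ w₂
        = gB p w₁.1 w₂.1 + f p ^ 2 * gF q w₁.2 w₂.2 := warped_apply gB gF f (p, q) w₁ w₂
      _ = gB p w₁.1 w₂.1 := by rw [claim2 X Z w₁ hw₁ w₂.2]; ring
      _ = gB p v₁ w₂.1 := claim1 X Z w₁ v₁ hw₁ hv₁ w₂.1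
      _ = gB p w₂.1 v₁ := hsym _ _
      _ = gB p v₂ v₁ := claim1 Y T w₂ v₂ hw₂ hv₂ v₁
      _ = gB p v₁ v₂ := hsym _ _
  have e34 : warpedMetric gB gF f (p, q) w₃ w₄ = gB p v₃ v₄ :=
    calc warpedMetric gB gF f (p, q) w₃ w₄
        = gB p w₃.1 w₄.1 + f p ^ 2 * gF q w₃.2 w₄.2 := warped_apply gB gF f (p, q) w₃ w₄
      _ = gB p w₃.1 w₄.1 := by rw [claim2 Y Z w₃ hw₃ w₄.2]; ring
      _ = gB p v₃ w₄.1 := claim1 Y Z w₃ v₃ hw₃ hv₃ w₄.1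
      _ = gB p w₄.1 v₃ := hsym _ _
      _ = gB p v₄ v₃ := claim1 X T w₄ v₄ hw₄ hv₄ v₃
      _ = gB p v₃ v₄ := hsym _ _
  have hk1 : koszul (warpedMetric gB gF f) (liftVecB Y) (liftVecB Z) (liftVecB T)
      = fun x : E₁ × E₂ => koszul gB Y Z T x.1 := funext (koszul_lift gB gF f Y Z T)
  have hk2 : koszul (warpedMetric gB gF f) (liftVecB X) (liftVecB Z) (liftVecB T)
      = fun x : E₁ × E₂ => koszul gB X Z T x.1 := funext (koszul_lift gB gF f X Z T)
  unfold riemannExpr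
  rw [hk1, hk2, lieB_lift, koszul_lift, e12, e34,
    show liftVecB X (p, q) = ((X p : E₁), (0 : E₂)) from rfl,
    show liftVecB Y (p, q) = ((Y p : E₁), (0 : E₂)) from rfl,
    fderiv_fst_comp (koszul gB Y Z T) (p, q) (X p) 0,
    fderiv_fst_comp (koszul gB X Z T) (p, q) (Y p) 0]


end
end

section
/- Let μ, ρ : ℝ → ℝ be smooth functions with μ(−r)² = μ(r)² and ρ(−r)² = ρ(r)² for all r ∈ ℝ, and let ε ∈ {−1, 1}. Define G : ℝ² \ {(0,0)} → Matrix (Fin 2) (Fin 2) ℝ by, writing r := √(x²+y²): G(x,y)₁₁ = ε·μ(r)² − ((ε·μ(r)²·r² − ρ(r)²)/r⁴)·y², G(x,y)₁₂ = G(x,y)₂₁ = ((ε·μ(r)²·r² − ρ(r)²)/r⁴)·x·y, G(x,y)₂₂ = ε·μ(r)² − ((ε·μ(r)²·r² − ρ(r)²)/r⁴)·x². Then G extends to a smooth map ℝ² → Matrix (Fin 2) (Fin 2) ℝ if and only if there exists a smooth function u : ℝ → ℝ such that ρ(r)² = ε·μ(r)²·r² + u(r)·r⁴ for all r ∈ ℝ.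 -/
set_option maxHeartbeats 1000000

open scoped ContDiff
open intervalIntegral MeasureTheory Metric

open scoped ContDiff
open intervalIntegral MeasureTheory Metric

private lemma contDiff_parametric_integral (n : ℕ) : ∀ (F : ℝ × ℝ → ℝ), ContDiff ℝ ∞ F →
    ContDiff ℝ (n : WithTop ℕ∞) (fun t => ∫ s in (0:ℝ)..1, F (t, s)) := by
  induction n with
  | zero =>
    intro F hF
    rw [Nat.cast_zero, contDiff_zero]
    exact continuous_parametric_intervalIntegral_of_continuous'
      (f := fun t s => F (t, s)) (by exact hF.continuous) 0 1
  | succ n ih =>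
    intro F hF
    set F' : ℝ × ℝ → ℝ := fun p => fderiv ℝ F p (1, 0) with hF'def
    have hF' : ContDiff ℝ ∞ F' :=
      (hF.fderiv_right (m := ∞) (by exact_mod_cast le_top)).clm_apply contDiff_const
    have hcont : Continuous F := hF.continuous
    have hcont' : Continuous F' := hF'.continuous
    have hderiv : ∀ t₀ : ℝ, HasDerivAt (fun t => ∫ s in (0:ℝ)..1, F (t, s))
        (∫ s in (0:ℝ)..1, F' (t₀, s)) t₀ := by
      intro t₀
      obtain ⟨C, hC⟩ : ∃ C, ∀ p ∈ (Set.Icc (t₀ - 1) (t₀ + 1) ×ˢ Set.Icc (0:ℝ) 1), ‖F' p‖ ≤ C :=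
        (isCompact_Icc.prod isCompact_Icc).exists_bound_of_continuousOn hcont'.continuousOn
      have key := intervalIntegral.hasDerivAt_integral_of_dominated_loc_of_deriv_le (μ := volume)
        (F := fun x s => F (x, s)) (F' := fun x s => F' (x, s)) (x₀ := t₀)
        (a := 0) (b := 1) (bound := fun _ => C) (s := Metric.ball t₀ 1) (Metric.ball_mem_nhds t₀ one_pos)
        (Filter.Eventually.of_forall (fun x => (hcont.comp (by fun_prop)).aestronglyMeasurable))
        ((hcont.comp (by fun_prop)).intervalIntegrable 0 1)
        ((hcont'.comp (by fun_prop)).aestronglyMeasurable)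
        (Filter.Eventually.of_forall (fun s hs x hx => by
          refine hC (x, s) ⟨?_, ?_⟩
          · have := (mem_ball.mp hx).le
            rw [Real.dist_eq, abs_sub_le_iff] at this
            constructor <;> [linarith [this.1]; linarith [this.2]]
          · exact Set.mem_Icc.mpr
              ⟨(Set.mem_Ioc.mp (by simpa [Set.uIoc_of_le zero_le_one] using hs)).1.le,
               (Set.mem_Ioc.mp (by simpa [Set.uIoc_of_le zero_le_one] using hs)).2⟩))
        (intervalIntegrable_const)
        (Filter.Eventually.of_forall (fun s _ x _ => by
          have h1 : HasFDerivAt F (fderiv ℝ F (x, s)) (x, s) :=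
            ((hF.differentiable (by simp)) (x, s)).hasFDerivAt
          have h2 : HasDerivAt (fun x : ℝ => (x, s)) ((1:ℝ), (0:ℝ)) x :=
            (hasDerivAt_id x).prodMk (hasDerivAt_const x s)
          simpa [hF'def, Function.comp_def] using h1.comp_hasDerivAt x h2))
      exact key.2
    have hdiff : Differentiable ℝ (fun t => ∫ s in (0:ℝ)..1, F (t, s)) :=
      fun t => (hderiv t).differentiableAt
    have heq : deriv (fun t => ∫ s in (0:ℝ)..1, F (t, s))
        = fun t => ∫ s in (0:ℝ)..1, F' (t, s) := funext fun t => (hderiv t).deriv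
    have : ((n + 1 : ℕ) : WithTop ℕ∞) = (n : WithTop ℕ∞) + 1 := by push_cast; ring
    rw [this, contDiff_succ_iff_deriv]
    refine ⟨hdiff, by simp, ?_⟩
    rw [heq]
    exact ih F' hF'

private lemma hadamard {h : ℝ → ℝ} (hh : ContDiff ℝ ∞ h) (h0 : h 0 = 0) :
    ∃ g : ℝ → ℝ, ContDiff ℝ ∞ g ∧ ∀ t, h t = t * g t := by
  have hd : ContDiff ℝ ∞ (deriv h) := (contDiff_infty_iff_deriv.mp hh).2
  refine ⟨fun t => ∫ s in (0:ℝ)..1, deriv h (s * t), ?_, ?_⟩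
  · rw [contDiff_infty]
    intro n
    exact contDiff_parametric_integral n (fun p => deriv h (p.2 * p.1))
      (hd.comp (contDiff_snd.mul contDiff_fst))
  · intro t
    have hFTC : ∫ s in (0:ℝ)..1, deriv h (s * t) * t = h (1 * t) - h (0 * t) := by
      refine intervalIntegral.integral_eq_sub_of_hasDerivAt (f := fun s => h (s * t)) (fun s _ => ?_) ?_
      · have h1 : HasDerivAt (fun s : ℝ => s * t) t s := hasDerivAt_mul_const t
        have h2 : HasDerivAt h (deriv h (s * t)) (s * t) :=
          ((hh.differentiable (by simp)) (s * t)).hasDerivAt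
        exact h2.comp s h1
      · exact ((hd.continuous.comp (by fun_prop)).mul continuous_const).intervalIntegrable 0 1
    rw [intervalIntegral.integral_mul_const] at hFTC
    rw [one_mul, zero_mul, h0, sub_zero] at hFTC
    rw [← hFTC]; ring

/-- Hadamard division for odd smooth functions: the quotient is even. -/
private lemma hadamard_even {h : ℝ → ℝ} (hh : ContDiff ℝ ∞ h) (hodd : ∀ t, h (-t) = - h t) :
    ∃ g : ℝ → ℝ, ContDiff ℝ ∞ g ∧ (∀ t, g (-t) = g t) ∧ ∀ t, h t = t * g t := by
  have h0 : h 0 = 0 := by have := hodd 0; simp at this; linarith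
  obtain ⟨g, hg, hgh⟩ := hadamard hh h0
  refine ⟨g, hg, fun t => ?_, hgh⟩
  rcases eq_or_ne t 0 with rfl | ht
  · simp
  · have h1 := hgh (-t)
    have h2 := hgh t
    rw [hodd t] at h1
    have h3 : t * g (-t) = t * g t := by linarith
    exact mul_left_cancel₀ ht h3


private lemma contDiff_even_comp_radius (n : ℕ) :
    ∀ (f : ℝ → ℝ), ContDiff ℝ ∞ f → (∀ t, f (-t) = f t) →
    ContDiff ℝ (n : WithTop ℕ∞) (fun z : ℝ × ℝ => f (Real.sqrt (z.1 ^ 2 + z.2 ^ 2))) := by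
  induction n with
  | zero =>
    intro f hf _
    rw [Nat.cast_zero, contDiff_zero]
    exact hf.continuous.comp (Real.continuous_sqrt.comp (by fun_prop))
  | succ n ih =>
    intro f hf he
    have hodd : ∀ t, deriv f (-t) = - deriv f t := by
      intro t
      have h1 : deriv (fun x => f (-x)) t = - deriv f (-t) := deriv_comp_neg f t
      rw [funext he] at h1
      linarith
    obtain ⟨g, hg, hge, hfg⟩ := hadamard_even (contDiff_infty_iff_deriv.mp hf).2 hodd
    have hgc : Continuous g := hg.continuous
    set fz := ContinuousLinearMap.fst ℝ ℝ ℝ with hfz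
    set sz := ContinuousLinearMap.snd ℝ ℝ ℝ with hsz
    set r : ℝ × ℝ → ℝ := fun z => Real.sqrt (z.1 ^ 2 + z.2 ^ 2) with hrdef
    set L : ℝ × ℝ → (ℝ × ℝ →L[ℝ] ℝ) :=
      fun z => (g (r z) * z.1) • fz + (g (r z) * z.2) • sz with hLdef
    have key : ∀ z, HasFDerivAt (fun z : ℝ × ℝ => f (r z)) (L z) z := by
      intro z
      rcases eq_or_ne z 0 with rfl | hz
      · -- origin
        have hL0 : L 0 = 0 := by simp [hLdef]
        rw [hL0]
        rw [hasFDerivAt_iff_isLittleO_nhds_zero]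
        have hf0 : HasDerivAt f 0 0 := by
          have := ((hf.differentiable (by simp)) 0).hasDerivAt
          rwa [show deriv f 0 = 0 by rw [hfg 0]; ring] at this
        have h1 : (fun t => f t - f 0) =o[nhds 0] (fun t : ℝ => t) := by
          simpa using hasDerivAt_iff_isLittleO.mp hf0
        have h2 : Filter.Tendsto r (nhds 0) (nhds 0) := by
          have hc : Continuous r := Real.continuous_sqrt.comp (by fun_prop)
          have := hc.tendsto 0
          simpa [hrdef] using this
        have h3 := h1.comp_tendsto h2
        have h4 : (fun z : ℝ × ℝ => r z) =O[nhds 0] (fun z => z) := by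
          refine Asymptotics.IsBigO.of_bound (Real.sqrt 2) (Filter.Eventually.of_forall ?_)
          intro z
          have hb1 : z.1 ^ 2 ≤ ‖z‖ ^ 2 := by
            have h0 : |z.1| ≤ ‖z‖ := by simpa using norm_fst_le z
            calc z.1 ^ 2 = |z.1| ^ 2 := (sq_abs _).symm
              _ ≤ ‖z‖ ^ 2 := pow_le_pow_left₀ (abs_nonneg _) h0 2
          have hb2 : z.2 ^ 2 ≤ ‖z‖ ^ 2 := by
            have h0 : |z.2| ≤ ‖z‖ := by simpa using norm_snd_le z
            calc z.2 ^ 2 = |z.2| ^ 2 := (sq_abs _).symm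
              _ ≤ ‖z‖ ^ 2 := pow_le_pow_left₀ (abs_nonneg _) h0 2
          have : r z ≤ Real.sqrt (2 * ‖z‖ ^ 2) := Real.sqrt_le_sqrt (by linarith)
          have h5 : Real.sqrt (2 * ‖z‖ ^ 2) = Real.sqrt 2 * ‖z‖ := by
            rw [Real.sqrt_mul (by norm_num)]
            congr 1
            rw [Real.sqrt_sq (norm_nonneg z)]
          rw [Real.norm_eq_abs, abs_of_nonneg (Real.sqrt_nonneg _)]
          rw [h5] at this
          exact this
        have h6 := h3.trans_isBigO h4
        have hr0 : r 0 = 0 := by simp [hrdef]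
        simpa [Function.comp_def, hr0] using h6
      · -- away from origin
        have hz1 : z.1 ≠ 0 ∨ z.2 ≠ 0 := by
          by_contra h
          push_neg at h
          exact hz (Prod.ext h.1 h.2)
        have hv : 0 < z.1 ^ 2 + z.2 ^ 2 := by
          rcases hz1 with h | h
          · have := sq_pos_of_ne_zero h; nlinarith [sq_nonneg z.2]
          · have := sq_pos_of_ne_zero h; nlinarith [sq_nonneg z.1]
        have hr : 0 < r z := Real.sqrt_pos.mpr hv
        have hQ : HasFDerivAt (fun z : ℝ × ℝ => z.1 ^ 2 + z.2 ^ 2)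
            ((z.1 • fz + z.1 • fz) + (z.2 • sz + z.2 • sz)) z := by
          have hpow : (fun z : ℝ × ℝ => z.1 ^ 2 + z.2 ^ 2)
              = fun z : ℝ × ℝ => z.1 * z.1 + z.2 * z.2 := by funext w; ring
          rw [hpow]
          exact (hasFDerivAt_fst.mul hasFDerivAt_fst).add (hasFDerivAt_snd.mul hasFDerivAt_snd)
        have hsq : HasDerivAt Real.sqrt (1 / (2 * Real.sqrt (z.1 ^ 2 + z.2 ^ 2)))
            (z.1 ^ 2 + z.2 ^ 2) := Real.hasDerivAt_sqrt hv.ne'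
        have hfd : HasDerivAt f (deriv f (r z)) (r z) :=
          ((hf.differentiable (by simp)) (r z)).hasDerivAt
        have hcomp1 := hsq.comp_hasFDerivAt z hQ
        have hcomp2 := hfd.comp_hasFDerivAt z hcomp1
        have hEq : L z = deriv f (r z) • (1 / (2 * Real.sqrt (z.1 ^ 2 + z.2 ^ 2))) •
            (z.1 • fz + z.1 • fz + (z.2 • sz + z.2 • sz)) := by
          apply ContinuousLinearMap.ext
          intro w
          simp only [hLdef, ContinuousLinearMap.add_apply, ContinuousLinearMap.smul_apply,
            hfz, hsz, ContinuousLinearMap.coe_fst', ContinuousLinearMap.coe_snd', smul_eq_mul]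
          rw [hfg (r z)]
          have hrne : Real.sqrt (z.1 ^ 2 + z.2 ^ 2) ≠ 0 := hr.ne'
          field_simp
          ring
        rw [hEq]
        exact hcomp2
    have hdiff : Differentiable ℝ (fun z : ℝ × ℝ => f (r z)) := fun z => (key z).differentiableAt
    have hfderiv : (fderiv ℝ fun z : ℝ × ℝ => f (r z)) = L := funext fun z => (key z).fderiv
    have hLcd : ContDiff ℝ (n : WithTop ℕ∞) L := by
      have hgr := ih g hg hge
      exact ((hgr.mul contDiff_fst).smul contDiff_const).add
        ((hgr.mul contDiff_snd).smul contDiff_const)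
    have hcast : ((n + 1 : ℕ) : WithTop ℕ∞) = (n : WithTop ℕ∞) + 1 := by push_cast; ring
    rw [hcast, contDiff_succ_iff_fderiv]
    refine ⟨hdiff, by simp, ?_⟩
    rw [hfderiv]
    exact hLcd

private lemma contDiff_even_comp_radius' {f : ℝ → ℝ} (hf : ContDiff ℝ ∞ f)
    (he : ∀ t, f (-t) = f t) :
    ContDiff ℝ ∞ (fun z : ℝ × ℝ => f (Real.sqrt (z.1 ^ 2 + z.2 ^ 2))) :=
  contDiff_infty.mpr fun n => contDiff_even_comp_radius n f hf he


noncomputable section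

/-- The matrix, in Cartesian coordinates `(x,y) = (r cos θ, r sin θ)`, of the polar
warped product metric `ε μ²(r) dr⊗dr + ρ²(r) dθ⊗dθ` on `ℝ² \ {(0,0)}`. -/
def polarG (ε : ℝ) (μ ρ : ℝ → ℝ) : ℝ × ℝ → Matrix (Fin 2) (Fin 2) ℝ :=
  fun z =>
    let r := Real.sqrt (z.1 ^ 2 + z.2 ^ 2)
    !![ε * μ r ^ 2 - ((ε * μ r ^ 2 * r ^ 2 - ρ r ^ 2) / r ^ 4) * z.2 ^ 2,
        ((ε * μ r ^ 2 * r ^ 2 - ρ r ^ 2) / r ^ 4) * z.1 * z.2;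
      ((ε * μ r ^ 2 * r ^ 2 - ρ r ^ 2) / r ^ 4) * z.1 * z.2,
        ε * μ r ^ 2 - ((ε * μ r ^ 2 * r ^ 2 - ρ r ^ 2) / r ^ 4) * z.1 ^ 2]

/-- the polar warped product metric extends smoothly across the origin
iff `ρ² = ε μ² r² + u r⁴` for some smooth `u`. -/
theorem polarG_extends_smooth_iff (ε : ℝ) (hε : ε = 1 ∨ ε = -1)
    (μ ρ : ℝ → ℝ) (hμ : ContDiff ℝ (⊤ : ℕ∞) μ) (hρ : ContDiff ℝ (⊤ : ℕ∞) ρ)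
    (hμe : ∀ r : ℝ, μ (-r) ^ 2 = μ r ^ 2) (hρe : ∀ r : ℝ, ρ (-r) ^ 2 = ρ r ^ 2) :
    (∃ G : ℝ × ℝ → Matrix (Fin 2) (Fin 2) ℝ,
      (∀ i j : Fin 2, ContDiff ℝ (⊤ : ℕ∞) (fun z => G z i j)) ∧
      ∀ z : ℝ × ℝ, z ≠ (0, 0) → G z = polarG ε μ ρ z) ↔
    (∃ u : ℝ → ℝ, ContDiff ℝ (⊤ : ℕ∞) u ∧
      ∀ r : ℝ, ρ r ^ 2 = ε * μ r ^ 2 * r ^ 2 + u r * r ^ 4) := by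
  constructor
  · rintro ⟨G, hGs, hGeq⟩
    have hμa : ∀ t : ℝ, μ |t| ^ 2 = μ t ^ 2 := by
      intro t
      rcases abs_cases t with ⟨h, _⟩ | ⟨h, _⟩
      · rw [h]
      · rw [h]; exact hμe t
    have hρa : ∀ t : ℝ, ρ |t| ^ 2 = ρ t ^ 2 := by
      intro t
      rcases abs_cases t with ⟨h, _⟩ | ⟨h, _⟩
      · rw [h]
      · rw [h]; exact hρe t
    -- values on the axes
    have e00 : ∀ t : ℝ, t ≠ 0 → G (t, 0) 0 0 = ε * μ t ^ 2 := by
      intro t ht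
      rw [hGeq (t, 0) (by simp [Prod.ext_iff, ht])]
      simp [polarG, Real.sqrt_sq_eq_abs, hμa]
    have e11 : ∀ t : ℝ, t ≠ 0 → G (t, 0) 1 1 = ρ t ^ 2 / t ^ 2 := by
      intro t ht
      rw [hGeq (t, 0) (by simp [Prod.ext_iff, ht])]
      have habs2 : |t| ^ 2 = t ^ 2 := sq_abs t
      have habs4 : |t| ^ 4 = t ^ 4 := by
        rw [pow_abs, abs_of_nonneg (by positivity : (0:ℝ) ≤ t ^ 4)]
      simp only [polarG, Matrix.cons_val', Matrix.cons_val_zero, Matrix.cons_val_one,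
        Matrix.head_cons, Matrix.empty_val', Matrix.cons_val_fin_one, Matrix.head_fin_const,
        Fin.isValue, Matrix.of_apply]
      rw [show ((t, (0:ℝ)).1 ^ 2 + (t, (0:ℝ)).2 ^ 2) = t ^ 2 by norm_num,
        Real.sqrt_sq_eq_abs, hμa, hρa, habs2, habs4]
      field_simp
      ring
    have e00' : ∀ t : ℝ, t ≠ 0 → G (0, t) 0 0 = ρ t ^ 2 / t ^ 2 := by
      intro t ht
      rw [hGeq (0, t) (by simp [Prod.ext_iff, ht])]
      have habs2 : |t| ^ 2 = t ^ 2 := sq_abs t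
      have habs4 : |t| ^ 4 = t ^ 4 := by
        rw [pow_abs, abs_of_nonneg (by positivity : (0:ℝ) ≤ t ^ 4)]
      simp only [polarG, Matrix.cons_val', Matrix.cons_val_zero, Matrix.cons_val_one,
        Matrix.head_cons, Matrix.empty_val', Matrix.cons_val_fin_one, Matrix.head_fin_const,
        Fin.isValue, Matrix.of_apply]
      rw [show (((0:ℝ), t).1 ^ 2 + ((0:ℝ), t).2 ^ 2) = t ^ 2 by norm_num,
        Real.sqrt_sq_eq_abs, hμa, hρa, habs2, habs4]
      field_simp
      ring
    -- continuity facts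
    have hline : ContDiff ℝ ∞ (fun t : ℝ => ((t, 0) : ℝ × ℝ)) := contDiff_id.prodMk contDiff_const
    have hline' : ContDiff ℝ ∞ (fun t : ℝ => ((0, t) : ℝ × ℝ)) := contDiff_const.prodMk contDiff_id
    have hc11 : Continuous (fun t : ℝ => G (t, 0) 1 1) :=
      ((hGs 1 1).comp hline).continuous
    have hc00 : Continuous (fun t : ℝ => G (t, 0) 0 0) :=
      ((hGs 0 0).comp hline).continuous
    have hc00' : Continuous (fun t : ℝ => G (0, t) 0 0) :=
      ((hGs 0 0).comp hline').continuous
    -- G (0,0) 1 1 = G (0,0) 0 0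
    have hkey : G ((0:ℝ), (0:ℝ)) 1 1 = G ((0:ℝ), (0:ℝ)) 0 0 := by
      have t1 : Filter.Tendsto (fun t : ℝ => G (t, 0) 1 1) (nhdsWithin 0 {0}ᶜ)
          (nhds (G ((0:ℝ), (0:ℝ)) 1 1)) := (hc11.tendsto 0).mono_left nhdsWithin_le_nhds
      have t2 : Filter.Tendsto (fun t : ℝ => G (0, t) 0 0) (nhdsWithin 0 {0}ᶜ)
          (nhds (G ((0:ℝ), (0:ℝ)) 0 0)) := (hc00'.tendsto 0).mono_left nhdsWithin_le_nhds
      have heqf : ∀ t ∈ ({0}ᶜ : Set ℝ), G (t, 0) 1 1 = G (0, t) 0 0 := by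
        intro t ht
        rw [e11 t ht, e00' t ht]
      have t1' : Filter.Tendsto (fun t : ℝ => G (0, t) 0 0) (nhdsWithin 0 {0}ᶜ)
          (nhds (G ((0:ℝ), (0:ℝ)) 1 1)) := by
        refine t1.congr' ?_
        exact Filter.eventuallyEq_of_mem self_mem_nhdsWithin heqf
      exact tendsto_nhds_unique t1' t2
    -- the function w
    set w : ℝ → ℝ := fun t => G (t, 0) 1 1 - G (t, 0) 0 0 with hwdef
    have hwsmooth : ContDiff ℝ ∞ w := ((hGs 1 1).comp hline).sub ((hGs 0 0).comp hline)
    have hwval : ∀ t : ℝ, t ≠ 0 → w t = (ρ t ^ 2 - ε * μ t ^ 2 * t ^ 2) / t ^ 2 := by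
      intro t ht
      rw [hwdef]
      simp only
      rw [e11 t ht, e00 t ht]
      field_simp
    have hw0 : w 0 = 0 := by
      rw [hwdef]
      simp only
      rw [hkey]
      ring
    obtain ⟨ψ, hψ, hψw⟩ := hadamard hwsmooth hw0
    have hweven : ∀ t : ℝ, t ≠ 0 → w (-t) = w t := by
      intro t ht
      rw [hwval t ht, hwval (-t) (neg_ne_zero.mpr ht), hρe, hμe, neg_sq]
    have hψodd : ∀ t : ℝ, t ≠ 0 → ψ (-t) = -ψ t := by
      intro t ht
      have h1 := hψw (-t)
      have h2 := hψw t
      rw [hweven t ht, h2] at h1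
      have h3 : t * ψ (-t) = t * (-ψ t) := by linarith
      exact mul_left_cancel₀ ht h3
    have hψ0 : ψ 0 = 0 := by
      have hcψ : Continuous ψ := hψ.continuous
      have t1 : Filter.Tendsto ψ (nhdsWithin 0 {0}ᶜ) (nhds (ψ 0)) :=
        (hcψ.tendsto 0).mono_left nhdsWithin_le_nhds
      have t2 : Filter.Tendsto (fun t : ℝ => -ψ (-t)) (nhdsWithin 0 {0}ᶜ) (nhds (-ψ 0)) := by
        have : Continuous (fun t : ℝ => -ψ (-t)) := (hcψ.comp continuous_neg).neg
        have h4 := (this.tendsto 0).mono_left (nhdsWithin_le_nhds (s := ({0}ᶜ : Set ℝ)))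
        simpa using h4
      have t1' : Filter.Tendsto (fun t : ℝ => -ψ (-t)) (nhdsWithin 0 {0}ᶜ) (nhds (ψ 0)) := by
        refine t1.congr' ?_
        refine Filter.eventuallyEq_of_mem self_mem_nhdsWithin (fun t ht => ?_)
        have := hψodd t ht
        linarith
      have := tendsto_nhds_unique t1' t2
      linarith
    obtain ⟨u, hu, huψ⟩ := hadamard hψ hψ0
    have hρ0 : ρ 0 ^ 2 = 0 := by
      have t1 : Filter.Tendsto (fun t : ℝ => ρ t ^ 2) (nhdsWithin 0 {0}ᶜ) (nhds (ρ 0 ^ 2)) :=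
        (((hρ.continuous).pow 2).tendsto 0).mono_left nhdsWithin_le_nhds
      have t2 : Filter.Tendsto (fun t : ℝ => G (t, 0) 1 1 * t ^ 2) (nhdsWithin 0 {0}ᶜ)
          (nhds 0) := by
        have hcont : Continuous (fun t : ℝ => G (t, 0) 1 1 * t ^ 2) :=
          hc11.mul (continuous_pow 2)
        have h4 := (hcont.tendsto 0).mono_left (nhdsWithin_le_nhds (s := ({0}ᶜ : Set ℝ)))
        simpa using h4
      have t1' : Filter.Tendsto (fun t : ℝ => G (t, 0) 1 1 * t ^ 2) (nhdsWithin 0 {0}ᶜ)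
          (nhds (ρ 0 ^ 2)) := by
        refine t1.congr' ?_
        refine Filter.eventuallyEq_of_mem self_mem_nhdsWithin (fun t ht => ?_)
        have ht' : t ≠ 0 := ht
        rw [e11 t ht, div_mul_cancel₀ _ (pow_ne_zero 2 ht')]
      exact tendsto_nhds_unique t1' t2
    refine ⟨u, hu, ?_⟩
    intro t
    rcases eq_or_ne t 0 with rfl | ht
    · rw [hρ0]; ring
    · have h1 := hwval t ht
      have h2 := hψw t
      have h3 := huψ t
      have h4 : w t * t ^ 2 = ρ t ^ 2 - ε * μ t ^ 2 * t ^ 2 := by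
        rw [h1]
        field_simp
      rw [h2, h3] at h4
      linear_combination -h4
  · rintro ⟨u, hu, huid⟩
    have hue : ∀ t, u (-t) = u t := by
      intro t
      rcases eq_or_ne t 0 with rfl | ht
      · simp
      · have h1 := huid t
        have h2 := huid (-t)
        rw [hρe, hμe, neg_sq, show (-t : ℝ) ^ 4 = t ^ 4 from by ring] at h2
        have h3 : u (-t) * t ^ 4 = u t * t ^ 4 := by linarith
        exact mul_right_cancel₀ (pow_ne_zero 4 ht) h3
    have hA : ContDiff ℝ ∞ (fun z : ℝ × ℝ => μ (Real.sqrt (z.1 ^ 2 + z.2 ^ 2)) ^ 2) :=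
      contDiff_even_comp_radius' (f := fun t => μ t ^ 2) (hμ.pow 2) hμe
    have hB : ContDiff ℝ ∞ (fun z : ℝ × ℝ => u (Real.sqrt (z.1 ^ 2 + z.2 ^ 2))) :=
      contDiff_even_comp_radius' hu hue
    refine ⟨fun z => !![ε * μ (Real.sqrt (z.1 ^ 2 + z.2 ^ 2)) ^ 2
          + u (Real.sqrt (z.1 ^ 2 + z.2 ^ 2)) * z.2 ^ 2,
        -(u (Real.sqrt (z.1 ^ 2 + z.2 ^ 2)) * z.1 * z.2);
        -(u (Real.sqrt (z.1 ^ 2 + z.2 ^ 2)) * z.1 * z.2),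
        ε * μ (Real.sqrt (z.1 ^ 2 + z.2 ^ 2)) ^ 2
          + u (Real.sqrt (z.1 ^ 2 + z.2 ^ 2)) * z.1 ^ 2], ?_, ?_⟩
    · intro i j
      fin_cases i <;> fin_cases j <;>
        simp only [Matrix.cons_val', Matrix.cons_val_zero, Matrix.cons_val_one, Matrix.head_cons,
          Matrix.empty_val', Matrix.cons_val_fin_one, Matrix.head_fin_const, Fin.isValue,
          Matrix.of_apply]
      · exact (contDiff_const.mul hA).add (hB.mul (contDiff_snd.pow 2))
      · exact ((hB.mul contDiff_fst).mul contDiff_snd).neg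
      · exact ((hB.mul contDiff_fst).mul contDiff_snd).neg
      · exact (contDiff_const.mul hA).add (hB.mul (contDiff_fst.pow 2))
    · intro z hz
      have hz1 : z.1 ≠ 0 ∨ z.2 ≠ 0 := by
        by_contra h
        push_neg at h
        exact hz (Prod.ext h.1 h.2)
      have hv : 0 < z.1 ^ 2 + z.2 ^ 2 := by
        rcases hz1 with h | h
        · have := sq_pos_of_ne_zero h; nlinarith [sq_nonneg z.2]
        · have := sq_pos_of_ne_zero h; nlinarith [sq_nonneg z.1]
      have hr : 0 < Real.sqrt (z.1 ^ 2 + z.2 ^ 2) := Real.sqrt_pos.mpr hv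
      have hc : (ε * μ (Real.sqrt (z.1 ^ 2 + z.2 ^ 2)) ^ 2 * Real.sqrt (z.1 ^ 2 + z.2 ^ 2) ^ 2
          - ρ (Real.sqrt (z.1 ^ 2 + z.2 ^ 2)) ^ 2) / Real.sqrt (z.1 ^ 2 + z.2 ^ 2) ^ 4
          = -u (Real.sqrt (z.1 ^ 2 + z.2 ^ 2)) := by
        rw [huid (Real.sqrt (z.1 ^ 2 + z.2 ^ 2))]
        have h4 : Real.sqrt (z.1 ^ 2 + z.2 ^ 2) ^ 4 ≠ 0 := pow_ne_zero 4 hr.ne'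
        field_simp
        ring
      ext i j
      fin_cases i <;> fin_cases j <;>
        simp only [polarG, Matrix.cons_val', Matrix.cons_val_zero, Matrix.cons_val_one,
          Matrix.head_cons, Matrix.empty_val', Matrix.cons_val_fin_one, Matrix.head_fin_const,
          Fin.isValue, Matrix.of_apply] <;> rw [hc] <;> ring_nf

end
end
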